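/- The determinant of the Redheffer matrix R(S) of a finite poset S with least element 0 equals ∑_C (−1)^{|C|} over all chains C (including the empty chain) contained in S \ {0}. -/

import Mathlib

set_option linter.unusedSectionVars false

open Matrix Finset
open scoped Classical

variable {S : Type*}

/-- The Redheffer matrix of a finite poset with a least element `⊥`. -/
noncomputable def posetRedheffer [PartialOrder S] [OrderBot S] [Fintype S] : Matrix S S ℤ :=
  fun x y => if x ≤ y ∨ y = ⊥ then 1 else 0

section Aux

variable [PartialOrder S] [OrderBot S] [Fintype S]

/-- The zeta matrix of the poset. -/
noncomputable def posetZeta : Matrix S S ℤ := fun x y => if x ≤ y then 1 else 0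

/-- `cfun z = ∑ (-1)^|C|` over chains strictly above `z`. -/
noncomputable def cfun (z : S) : ℤ :=
  ∑ C : Finset S,
    if IsChain (· ≤ ·) (C : Set S) ∧ ∀ w ∈ C, z < w then (-1 : ℤ) ^ C.card else 0

lemma chainAbove_insert {x : S} {C : Finset S}
    (h : IsChain (· ≤ ·) (C : Set S) ∧ ∀ w ∈ C, x ≤ w) :
    IsChain (· ≤ ·) ((insert x C : Finset S) : Set S) ∧ ∀ w ∈ insert x C, x ≤ w := by
  constructor
  · rw [Finset.coe_insert]
    exact h.1.insert (fun b hb _ => Or.inl (h.2 b hb))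
  · intro w hw
    rcases Finset.mem_insert.1 hw with rfl | hw
    · exact le_refl _
    · exact h.2 w hw

lemma chainAbove_erase {x : S} {C : Finset S}
    (h : IsChain (· ≤ ·) (C : Set S) ∧ ∀ w ∈ C, x ≤ w) :
    IsChain (· ≤ ·) ((C.erase x : Finset S) : Set S) ∧ ∀ w ∈ C.erase x, x ≤ w := by
  refine ⟨h.1.mono ?_, fun w hw => h.2 w (Finset.mem_of_mem_erase hw)⟩
  rw [Finset.coe_erase]
  exact Set.diff_subset

/-- A nonempty finite chain has a least element. -/
lemma chain_exists_least {D : Finset S} (hc : IsChain (· ≤ ·) (D : Set S)) (hne : D.Nonempty) :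
    ∃ m ∈ D, ∀ w ∈ D, m ≤ w := by
  obtain ⟨m, hm, hmin⟩ := D.exists_minimal hne
  refine ⟨m, hm, fun w hw => ?_⟩
  rcases eq_or_ne m w with rfl | hne'
  · exact le_refl _
  · rcases hc hm hw hne' with h | h
    · exact h
    · exact absurd (lt_of_le_of_ne h hne'.symm) (fun (hlt : w < m) => not_le_of_gt hlt (hmin hw hlt.le))

/-- The least element of a finite set, if it exists (junk value `⊥` otherwise). -/
noncomputable def leastOf (D : Finset S) : S :=
  if h : ∃ m ∈ D, ∀ w ∈ D, m ≤ w then h.choose else ⊥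

lemma leastOf_mem {D : Finset S} (h : ∃ m ∈ D, ∀ w ∈ D, m ≤ w) : leastOf D ∈ D := by
  rw [leastOf, dif_pos h]
  exact h.choose_spec.1

lemma leastOf_le {D : Finset S} (h : ∃ m ∈ D, ∀ w ∈ D, m ≤ w) :
    ∀ w ∈ D, leastOf D ≤ w := by
  rw [leastOf, dif_pos h]
  exact h.choose_spec.2

lemma leastOf_eq {D : Finset S} {m : S} (hm : m ∈ D) (hle : ∀ w ∈ D, m ≤ w) :
    leastOf D = m := by
  have h : ∃ m ∈ D, ∀ w ∈ D, m ≤ w := ⟨m, hm, hle⟩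
  exact le_antisymm (leastOf_le h m hm) (hle _ (leastOf_mem h))

/-- Toggling `x` shows the signed sum over chains in `[x, ∞)` vanishes. -/
lemma sum_chains_above_eq_zero (x : S) :
    ∑ C : Finset S,
      (if IsChain (· ≤ ·) (C : Set S) ∧ ∀ w ∈ C, x ≤ w then (-1 : ℤ) ^ C.card else 0) = 0 := by
  set P : Finset S → Prop := fun C => IsChain (· ≤ ·) (C : Set S) ∧ ∀ w ∈ C, x ≤ w with hP
  set σ : Finset S → Finset S := fun C => if x ∈ C then C.erase x else insert x C with hσ
  have hPiff : ∀ C, P C ↔ P (σ C) := by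
    intro C
    by_cases hx : x ∈ C
    · simp only [hσ, if_pos hx]
      constructor
      · exact chainAbove_erase
      · intro h
        have := chainAbove_insert (x := x) h
        rwa [Finset.insert_erase hx] at this
    · simp only [hσ, if_neg hx]
      constructor
      · exact chainAbove_insert
      · intro h
        refine ⟨h.1.mono ?_, fun w hw => h.2 w (Finset.mem_insert_of_mem hw)⟩
        rw [Finset.coe_insert]
        exact Set.subset_insert _ _
  refine Finset.sum_ninvolution σ ?_ ?_ (fun _ => Finset.mem_univ _) ?_
  · intro C
    by_cases hC : P C
    · rw [if_pos hC, if_pos ((hPiff C).1 hC)]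
      by_cases hx : x ∈ C
      · obtain ⟨n, hn⟩ : ∃ n, C.card = n + 1 :=
          ⟨C.card - 1, (Nat.succ_pred_eq_of_pos (Finset.card_pos.2 ⟨x, hx⟩)).symm⟩
        simp only [hσ, if_pos hx, Finset.card_erase_of_mem hx, hn]
        simp [pow_succ]
      · simp only [hσ, if_neg hx, Finset.card_insert_of_notMem hx]
        simp [pow_succ]
    · rw [if_neg hC, if_neg (fun h => hC ((hPiff C).2 h))]
      simp
  · intro C hC
    by_cases hx : x ∈ C
    · simp only [hσ, if_pos hx]
      intro h
      apply Finset.notMem_erase x C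
      rw [h]; exact hx
    · simp only [hσ, if_neg hx]
      intro h
      apply hx
      rw [← h]; exact Finset.mem_insert_self x C
  · intro C
    by_cases hx : x ∈ C
    · have h1 : x ∉ C.erase x := Finset.notMem_erase x C
      simp only [hσ, if_pos hx, if_neg h1, Finset.insert_erase hx]
    · have h1 : x ∈ insert x C := Finset.mem_insert_self x C
      simp only [hσ, if_neg hx, if_pos h1, Finset.erase_insert hx]

/-- The key column identity: `∑_{z ≥ x} cfun z = 1`. -/
lemma sum_cfun (x : S) : ∑ z : S, (if x ≤ z then cfun z else 0) = 1 := by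
  have step1 : ∑ z : S, (if x ≤ z then cfun z else 0) =
      ∑ p ∈ (Finset.univ ×ˢ Finset.univ : Finset (S × Finset S)),
        (if x ≤ p.1 ∧ IsChain (· ≤ ·) ((p.2 : Finset S) : Set S) ∧ ∀ w ∈ p.2, p.1 < w
          then (-1 : ℤ) ^ p.2.card else 0) := by
    rw [Finset.sum_product]
    refine Finset.sum_congr rfl fun z _ => ?_
    by_cases hz : x ≤ z
    · simp only [hz, true_and, if_true, cfun]
    · simp [hz]
  rw [step1]
  set s : Finset (S × Finset S) := (Finset.univ ×ˢ Finset.univ).filter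
      (fun p => x ≤ p.1 ∧ IsChain (· ≤ ·) ((p.2 : Finset S) : Set S) ∧ ∀ w ∈ p.2, p.1 < w)
      with hs
  set t : Finset (Finset S) := Finset.univ.filter
      (fun D => (IsChain (· ≤ ·) (D : Set S) ∧ ∀ w ∈ D, x ≤ w) ∧ D.Nonempty) with ht
  rw [← Finset.sum_filter, ← hs]
  -- bijection between s and t
  have hmem_s : ∀ p ∈ s, x ≤ p.1 ∧ IsChain (· ≤ ·) ((p.2 : Finset S) : Set S) ∧
      ∀ w ∈ p.2, p.1 < w := fun p hp => (Finset.mem_filter.1 hp).2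
  have hne : ∀ p ∈ s, p.1 ∉ p.2 := by
    intro p hp h
    exact lt_irrefl p.1 ((hmem_s p hp).2.2 p.1 h)
  have key : ∑ p ∈ s, (-1 : ℤ) ^ p.2.card = ∑ D ∈ t, -((-1 : ℤ) ^ D.card) := by
    refine Finset.sum_bij' (fun p _ => insert p.1 p.2)
      (fun D _ => (leastOf D, D.erase (leastOf D))) ?_ ?_ ?_ ?_ ?_
    · intro p hp
      obtain ⟨hx, hchain, hlt⟩ := hmem_s p hp
      refine Finset.mem_filter.2 ⟨Finset.mem_univ _, ⟨?_, ?_⟩, ⟨p.1, Finset.mem_insert_self _ _⟩⟩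
      · rw [Finset.coe_insert]
        exact hchain.insert (fun b hb _ => Or.inl (hlt b hb).le)
      · intro w hw
        rcases Finset.mem_insert.1 hw with rfl | hw
        · exact hx
        · exact hx.trans (hlt w hw).le
    · intro D hD
      obtain ⟨⟨hchain, habove⟩, hne'⟩ := (Finset.mem_filter.1 hD).2
      have hex := chain_exists_least hchain hne'
      refine Finset.mem_filter.2 ⟨Finset.mem_univ _, habove _ (leastOf_mem hex), ?_, ?_⟩
      · refine hchain.mono ?_
        rw [Finset.coe_erase]
        exact Set.diff_subset
      · intro w hw
        exact lt_of_le_of_ne (leastOf_le hex w (Finset.mem_of_mem_erase hw))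
          (Ne.symm (Finset.ne_of_mem_erase hw))
    · intro p hp
      obtain ⟨hx, hchain, hlt⟩ := hmem_s p hp
      have hmin : leastOf (insert p.1 p.2) = p.1 := by
        refine leastOf_eq (Finset.mem_insert_self _ _) fun w hw => ?_
        rcases Finset.mem_insert.1 hw with rfl | hw
        · exact le_refl _
        · exact (hlt w hw).le
      show (leastOf (insert p.1 p.2), (insert p.1 p.2).erase (leastOf (insert p.1 p.2))) = p
      rw [hmin, Finset.erase_insert (hne p hp)]
    · intro D hD
      obtain ⟨⟨hchain, habove⟩, hne'⟩ := (Finset.mem_filter.1 hD).2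
      exact Finset.insert_erase (leastOf_mem (chain_exists_least hchain hne'))
    · intro p hp
      rw [Finset.card_insert_of_notMem (hne p hp)]
      simp [pow_succ]
  rw [key]
  -- now evaluate ∑ D ∈ t, -(-1)^|D|
  have h0 := sum_chains_above_eq_zero x
  rw [← Finset.sum_filter] at h0
  have hempty : (∅ : Finset S) ∈ Finset.univ.filter
      (fun C : Finset S => IsChain (· ≤ ·) (C : Set S) ∧ ∀ w ∈ C, x ≤ w) := by
    refine Finset.mem_filter.2 ⟨Finset.mem_univ _, ?_, by simp⟩
    rw [Finset.coe_empty]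
    exact IsChain.empty
  have htE : t = (Finset.univ.filter
      (fun C : Finset S => IsChain (· ≤ ·) (C : Set S) ∧ ∀ w ∈ C, x ≤ w)).erase ∅ := by
    ext D
    simp only [ht, Finset.mem_filter, Finset.mem_erase, Finset.mem_univ, true_and]
    constructor
    · rintro ⟨hD, hne'⟩
      exact ⟨hne'.ne_empty, hD⟩
    · rintro ⟨hne', hD⟩
      exact ⟨hD, Finset.nonempty_of_ne_empty hne'⟩
  have hadd := Finset.add_sum_erase _ (fun C : Finset S => (-1 : ℤ) ^ C.card) hempty
  rw [h0] at hadd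
  have hsum : ∑ D ∈ t, (-1 : ℤ) ^ D.card = -1 := by
    rw [htE]
    simp only [Finset.card_empty, pow_zero] at hadd
    linarith
  calc ∑ D ∈ t, -((-1 : ℤ) ^ D.card) = -∑ D ∈ t, ((-1 : ℤ) ^ D.card) := by
        rw [Finset.sum_neg_distrib]
    _ = 1 := by rw [hsum]; ring

/-- Factorization of the Redheffer matrix. -/
lemma posetRedheffer_eq :
    posetRedheffer (S := S) = posetZeta * (1 : Matrix S S ℤ).updateCol ⊥ cfun := by
  ext x y
  rw [Matrix.mul_apply]
  by_cases hy : y = ⊥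
  · subst hy
    have : ∀ z : S, posetZeta x z * (1 : Matrix S S ℤ).updateCol ⊥ cfun z ⊥ =
        (if x ≤ z then cfun z else 0) := by
      intro z
      simp only [Matrix.updateCol_apply, if_pos rfl, posetZeta]
      split <;> simp
    rw [Finset.sum_congr rfl fun z _ => this z, sum_cfun]
    simp [posetRedheffer]
  · have : ∀ z : S, posetZeta x z * (1 : Matrix S S ℤ).updateCol ⊥ cfun z y =
        posetZeta x z * (1 : Matrix S S ℤ) z y := by
      intro z
      simp [Matrix.updateCol_apply, hy]
    rw [Finset.sum_congr rfl fun z _ => this z, ← Matrix.mul_apply, Matrix.mul_one]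
    simp [posetRedheffer, posetZeta, hy]

/-- The equiv underlying the linear extension. -/
noncomputable def linExtEquiv : S ≃ LinearExtension S where
  toFun := toLinearExtension
  invFun := fun x => x
  left_inv := fun _ => rfl
  right_inv := fun _ => rfl

lemma det_posetZeta : (posetZeta (S := S)).det = 1 := by
  letI : Fintype (LinearExtension S) := Fintype.ofEquiv S (linExtEquiv (S := S))
  rw [← Matrix.det_reindex_self (linExtEquiv (S := S)) (posetZeta (S := S))]
  rw [Matrix.det_of_upperTriangular]
  · simp [posetZeta, linExtEquiv]
  · intro i j hij
    simp only [Matrix.reindex_apply, Matrix.submatrix_apply, posetZeta, linExtEquiv,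
      Equiv.coe_fn_symm_mk, ite_eq_right_iff]
    intro hle
    exact absurd (toLinearExtension.monotone hle) (not_le.2 hij)

lemma det_updateColumn_one :
    ((1 : Matrix S S ℤ).updateCol ⊥ (cfun (S := S))).det = cfun (⊥ : S) := by
  have h := Matrix.cramer_apply (A := (1 : Matrix S S ℤ)) (b := cfun) (⊥ : S)
  rw [Matrix.cramer_one] at h
  simpa using h.symm

end Aux

/-- The determinant of the Redheffer matrix of a finite poset with least element `⊥`
equals `∑_C (-1)^{|C|}` over all chains `C` (including the empty chain) contained in
`S \ {⊥}`. -/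
theorem posetRedheffer_det_eq_sum_chains [PartialOrder S] [OrderBot S] [Fintype S] :
    (posetRedheffer (S := S)).det =
      ∑ C : Finset S,
        if IsChain (· ≤ ·) (C : Set S) ∧ (⊥ : S) ∉ C then (-1 : ℤ) ^ C.card else 0 := by
  rw [posetRedheffer_eq, Matrix.det_mul, det_posetZeta, det_updateColumn_one, one_mul, cfun]
  refine Finset.sum_congr rfl fun C _ => ?_
  congr 1
  apply propext
  constructor
  · rintro ⟨hc, hlt⟩
    exact ⟨hc, fun h => lt_irrefl ⊥ (hlt ⊥ h)⟩
  · rintro ⟨hc, hnot⟩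
    exact ⟨hc, fun w hw => bot_lt_iff_ne_bot.2 (fun h => hnot (h ▸ hw))⟩
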